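/- Let n ≥ 2, let G_1, …, G_n be groups, and let f : K → G_1 × G_2 × ⋯ × G_n be a group homomorphism that is 2-locally surjective, and whose abelianization f_ab : K → (G_1)_ab × ⋯ × (G_n)_ab (the composite of f with the product of the abelianization maps) is ⌈(n+1)/2⌉-locally surjective. Then the image of f contains the direct product of the commutator subgroups: every element x of the product with x_i in the commutator subgroup [G_i, G_i] for all i lies in the range of f. -/

import Mathlib

private lemma abel_eq_mem_commutator {G : Type*} [Group G] {a b : G}
    (h : Abelianization.of a = Abelianization.of b) : a⁻¹ * b ∈ commutator G := by
  have h' : (QuotientGroup.mk a : G ⧸ commutator G) = QuotientGroup.mk b := h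
  exact QuotientGroup.eq.mp h' 

open scoped commutatorElement in
private lemma key_lemma {n : ℕ} (hn : 2 ≤ n) {K : Type*} [Group K] {G : Fin n → Type*}
    [∀ i, Group (G i)] (f : K →* ∀ i, G i)
    (h2 : ∀ s : Finset (Fin n), s.card = 2 →
      Function.Surjective (fun k => (fun i : s => f k i.1)))
    (hab : ∀ s : Finset (Fin n), s.card = (n + 2) / 2 →
      Function.Surjective (fun k => (fun i : s => Abelianization.of (f k i.1)))) :
    ∀ t : ℕ, ∀ T : Finset (Fin n), T.card ≤ t → 2 ≤ T.card →
      ∀ g : ∀ i, G i, (∀ i ∈ T, g i ∈ commutator (G i)) →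
      ∃ k, ∀ i ∈ T, f k i = g i := by
  classical
  -- a convenient consequence of `hab` for sets of size at most `(n+2)/2`
  have hab' : ∀ S : Finset (Fin n), S.card ≤ (n + 2) / 2 → ∀ g : ∀ i, G i,
      ∃ k, ∀ i ∈ S, (f k i)⁻¹ * g i ∈ commutator (G i) := by
    intro S hS g
    obtain ⟨S', hSS', _, hS'card⟩ := Finset.exists_subsuperset_card_eq (S.subset_univ) hS
      (by rw [Finset.card_univ, Fintype.card_fin]; omega)
    obtain ⟨k, hk⟩ := hab S' hS'card (fun i : S' => Abelianization.of (g i.1))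
    refine ⟨k, fun i hi => ?_⟩
    have := congrFun hk ⟨i, hSS' hi⟩
    exact abel_eq_mem_commutator this
  -- base case helper: sets of size exactly two, arbitrary targets
  have hpair : ∀ T : Finset (Fin n), T.card = 2 → ∀ g : ∀ i, G i,
      ∃ k, ∀ i ∈ T, f k i = g i := by
    intro T hT g
    obtain ⟨k, hk⟩ := h2 T hT (fun i : T => g i.1)
    exact ⟨k, fun i hi => congrFun hk ⟨i, hi⟩⟩
  intro t
  induction t with
  | zero => intro T hT h2T _ _; omega
  | succ t ih =>
    intro T hTle h2T g hg
    rcases eq_or_lt_of_le h2T with hT2 | hT3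
    · exact hpair T hT2.symm g
    -- now `3 ≤ T.card`
    have hT3 : 3 ≤ T.card := hT3
    set tc := T.card with htc
    set m := (tc + 2) / 2 with hm
    have hm2 : 2 ≤ m := by omega
    have hmlt : m < tc := by omega
    have hmle : m ≤ (n + 2) / 2 := by
      have : tc ≤ n := by
        have := Finset.card_le_card (T.subset_univ)
        rwa [Finset.card_univ, Fintype.card_fin] at this
      omega
    -- the subgroup of tuples realizable on `T`
    set N : Subgroup (∀ i, G i) :=
      { carrier := { x | ∃ k, ∀ i ∈ T, f k i = x i }
        one_mem' := ⟨1, fun i _ => by simp⟩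
        mul_mem' := by
          rintro x y ⟨k1, hk1⟩ ⟨k2, hk2⟩
          exact ⟨k1 * k2, fun i hi => by simp [hk1 i hi, hk2 i hi]⟩
        inv_mem' := by
          rintro x ⟨k, hk⟩
          exact ⟨k⁻¹, fun i hi => by simp [hk i hi]⟩ } with hN
    -- single commutators in one coordinate are realizable
    have hsingle : ∀ i ∈ T, ∀ c ∈ commutator (G i), Pi.mulSingle i c ∈ N := by
      intro i hiT
      have hcomm : commutator (G i) ≤ N.comap (MonoidHom.mulSingle G i) := by
        rw [commutator_def, Subgroup.commutator_le]
        intro a _ b _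
        rw [Subgroup.mem_comap]
        -- choose S1 ∋ i inside T with card m
        obtain ⟨S1, hiS1, hS1T, hS1card⟩ := Finset.exists_subsuperset_card_eq
          (Finset.singleton_subset_iff.mpr hiT) (by simpa using hm2.trans' (by omega)) hmlt.le
        have hiS1 : i ∈ S1 := hiS1 (Finset.mem_singleton_self i)
        -- S2 := (T \ S1) ∪ {i}
        set S2 : Finset (Fin n) := insert i (T \ S1) with hS2
        have hiS2 : i ∈ S2 := Finset.mem_insert_self i _
        have hS2T : S2 ⊆ T := by
          intro x hx
          rcases Finset.mem_insert.mp hx with h | h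
          · exact h ▸ hiT
          · exact (Finset.mem_sdiff.mp h).1
        have hS2card : S2.card = tc - m + 1 := by
          rw [hS2, Finset.card_insert_of_notMem (by simp [hiS1]),
            Finset.card_sdiff_of_subset hS1T, hS1card]
        -- realize arbitrary values exactly on a subset `S` of card ≤ (n+2)/2 and < t+1
        have build : ∀ S : Finset (Fin n), i ∈ S → S.card ≤ (n + 2) / 2 → 2 ≤ S.card →
            S.card ≤ t → ∀ v : G i, ∃ k, f k i = v ∧ ∀ l ∈ S, l ≠ i → f k l = 1 := by
          intro S hiS hScard hS2le hSle v
          obtain ⟨x, hx⟩ := hab' S hScard (Pi.mulSingle i v)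
          set d : ∀ l, G l := fun l => (f x l)⁻¹ * Pi.mulSingle i v l with hd
          have hdcomm : ∀ l ∈ S, d l ∈ commutator (G l) := fun l hl => hx l hl
          obtain ⟨h, hh⟩ := ih S hSle hS2le d hdcomm
          refine ⟨x * h, ?_, ?_⟩
          · have := hh i hiS
            simp only [map_mul, Pi.mul_apply, this, hd]
            simp
          · intro l hl hli
            have := hh l hl
            simp only [map_mul, Pi.mul_apply, this, hd]
            simp [Pi.mulSingle_eq_of_ne hli]
        obtain ⟨y, hyi, hy1⟩ := build S1 hiS1 (hS1card ▸ hmle) (hS1card ▸ hm2)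
          (by omega) a
        obtain ⟨z, hzi, hz1⟩ := build S2 hiS2 (by omega) (by omega) (by omega) b
        refine ⟨⁅y, z⁆, fun l hl => ?_⟩
        have hfl : f ⁅y, z⁆ l = ⁅f y l, f z l⁆ := by
          rw [map_commutatorElement]; rfl
        rcases eq_or_ne l i with rfl | hli
        · rw [hfl, hyi, hzi]; simp [MonoidHom.mulSingle_apply, commutatorElement_def]
        · rw [hfl]
          have h1 : f ⁅y, z⁆ l = 1 := by
            rw [hfl]
            by_cases hlS1 : l ∈ S1
            · rw [hy1 l hlS1 hli]; simp
            · have hlS2 : l ∈ S2 := Finset.mem_insert_of_mem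
                (Finset.mem_sdiff.mpr ⟨hl, hlS1⟩)
              rw [hz1 l hlS2 hli]; simp
          rw [hfl] at h1
          rw [h1, MonoidHom.mulSingle_apply, Pi.mulSingle_eq_of_ne hli]
      intro c hc
      exact hcomm hc
    -- assemble: realize g on T coordinate by coordinate
    have assemble : ∀ T' : Finset (Fin n), T' ⊆ T →
        ∃ k, ∀ i ∈ T, f k i = if i ∈ T' then g i else 1 := by
      intro T'
      induction T' using Finset.induction_on with
      | empty => intro _; exact ⟨1, fun i hi => by simp⟩
      | @insert a T'' ha ihT =>
        intro hsub
        obtain ⟨k1, hk1⟩ := ihT (fun x hx => hsub (Finset.mem_insert_of_mem hx))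
        have haT : a ∈ T := hsub (Finset.mem_insert_self a T'')
        obtain ⟨k2, hk2⟩ := hsingle a haT (g a) (hg a haT)
        refine ⟨k2 * k1, fun i hi => ?_⟩
        rw [map_mul, Pi.mul_apply, hk1 i hi, hk2 i hi]
        rcases eq_or_ne i a with rfl | hia
        · simp [ha]
        · simp [Pi.mulSingle_eq_of_ne hia, Finset.mem_insert, hia]
    obtain ⟨k, hk⟩ := assemble T (Finset.Subset.refl T)
    exact ⟨k, fun i hi => by rw [hk i hi, if_pos hi]⟩

/-- after Ribet–Serre: if `f : K → G 1 × ⋯ × G n` is 2-locally surjective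
and its abelianization is ⌈(n+1)/2⌉-locally surjective, then the image of `f` contains the
direct product of the commutator subgroups.  (Here `(n+2)/2` is natural-number division,
which equals `⌈(n+1)/2⌉`.) -/
theorem stmt_1 {n : ℕ} (hn : 2 ≤ n) {K : Type*} [Group K] {G : Fin n → Type*}
    [∀ i, Group (G i)] (f : K →* ∀ i, G i)
    (h2 : ∀ s : Finset (Fin n), s.card = 2 →
      Function.Surjective (fun k => (fun i : s => f k i.1)))
    (hab : ∀ s : Finset (Fin n), s.card = (n + 2) / 2 →
      Function.Surjective (fun k => (fun i : s => Abelianization.of (f k i.1)))) :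
    ∀ x : ∀ i, G i, (∀ i, x i ∈ commutator (G i)) → x ∈ f.range := by
  intro x hx
  have hcard : (Finset.univ : Finset (Fin n)).card = n := by
    rw [Finset.card_univ, Fintype.card_fin]
  obtain ⟨k, hk⟩ := key_lemma hn f h2 hab n Finset.univ (le_of_eq hcard)
    (by rw [hcard]; exact hn) x (fun i _ => hx i)
  exact ⟨k, funext fun i => hk i (Finset.mem_univ i)⟩
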